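/- Let n ≥ 2 be an integer, let c and d be positive integers, and set m = lcm(c,d). Let i₁,…,i_k be distinct elements of {1,…,n−1} and let h ∈ {1,…,k}. Then the intersection of the subgroup of ℤⁿ generated by {c·e₁,…,c·eₙ} ∪ {d·(e_{i_1}+eₙ),…,d·(e_{i_{h−1}}+eₙ)} with the subgroup generated by d·(e_{i_h}+eₙ) equals the subgroup generated by m·(e_{i_h}+eₙ). (For h = 1 the first set is just {c·e₁,…,c·eₙ}.) -/

import Mathlib

set_option maxHeartbeats 1000000


/-- For `n ≥ 2`, positive integers `c, d` with `m = lcm(c,d)`, distinct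
indices `i₁, …, i_k ∈ {1, …, n-1}` and `h ∈ {1, …, k}`, the intersection of the subgroup
of `ℤⁿ` generated by `{c·e₁, …, c·eₙ} ∪ {d·(e_{i_1}+eₙ), …, d·(e_{i_{h-1}}+eₙ)}` with the
subgroup generated by `d·(e_{i_h}+eₙ)` is the subgroup generated by `m·(e_{i_h}+eₙ)`. -/
theorem stmt0 (n k : ℕ) (hn : 2 ≤ n) (c d : ℕ) (hc : 0 < c) (hd : 0 < d)
    (i : Fin k → Fin (n - 1)) (hinj : Function.Injective i) (h : Fin k) :
    AddSubgroup.closure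
        ((Set.range fun j : Fin n => (Pi.single j ((c : ℤ)) : Fin n → ℤ)) ∪
          ((fun j : Fin k =>
              ((d : ℤ) • (Pi.single (Fin.castLE (by omega) (i j)) (1 : ℤ) +
                Pi.single (⟨n - 1, by omega⟩ : Fin n) (1 : ℤ)) : Fin n → ℤ)) ''
            {j : Fin k | j < h})) ⊓
      AddSubgroup.closure
        {((d : ℤ) • (Pi.single (Fin.castLE (by omega) (i h)) (1 : ℤ) +
            Pi.single (⟨n - 1, by omega⟩ : Fin n) (1 : ℤ)) : Fin n → ℤ)} =
    AddSubgroup.closure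
        {(((Nat.lcm c d : ℕ) : ℤ) • (Pi.single (Fin.castLE (by omega) (i h)) (1 : ℤ) +
            Pi.single (⟨n - 1, by omega⟩ : Fin n) (1 : ℤ)) : Fin n → ℤ)} := by
  have hn' : n - 1 < n := by omega
  set a : Fin n := Fin.castLE (by omega) (i h) with ha
  set b : Fin n := (⟨n - 1, by omega⟩ : Fin n) with hb
  have hav : (a : ℕ) = (i h : ℕ) := rfl
  have hbv : (b : ℕ) = n - 1 := rfl
  have hih := (i h).isLt
  have hab : a ≠ b := by
    intro e
    rw [e] at hav
    omega
  set v : Fin n → ℤ := Pi.single a 1 + Pi.single b 1 with hv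
  have hva : v a = 1 := by
    simp only [hv, Pi.add_apply, Pi.single_eq_same, Pi.single_eq_of_ne hab, add_zero]
  set m : ℕ := Nat.lcm c d with hm
  apply le_antisymm
  · intro x hx
    rw [AddSubgroup.mem_inf] at hx
    obtain ⟨hx1, hx2⟩ := hx
    rw [AddSubgroup.mem_closure_singleton] at hx2 ⊢
    obtain ⟨t, ht⟩ := hx2
    have hdvd : (c : ℤ) ∣ x a := by
      have hle : AddSubgroup.closure
          ((Set.range fun j : Fin n => (Pi.single j ((c : ℤ)) : Fin n → ℤ)) ∪
            ((fun j : Fin k =>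
                ((d : ℤ) • (Pi.single (Fin.castLE (by omega) (i j)) (1 : ℤ) +
                  Pi.single (⟨n - 1, by omega⟩ : Fin n) (1 : ℤ)) : Fin n → ℤ)) ''
              {j : Fin k | j < h})) ≤
          (AddSubgroup.zmultiples (c : ℤ)).comap (Pi.evalAddMonoidHom (fun _ => ℤ) a) := by
        rw [AddSubgroup.closure_le]
        rintro y (⟨j, rfl⟩ | ⟨j, hj, rfl⟩)
        · simp only [SetLike.mem_coe, AddSubgroup.mem_comap,
            AddSubgroup.mem_zmultiples_iff]
          by_cases hja : j = a
          · refine ⟨1, ?_⟩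
            simp only [Pi.evalAddMonoidHom_apply]
            rw [hja, Pi.single_eq_same, one_smul]
          · refine ⟨0, ?_⟩
            simp only [Pi.evalAddMonoidHom_apply]
            rw [Pi.single_eq_of_ne (Ne.symm hja), zero_smul]
        · simp only [SetLike.mem_coe, AddSubgroup.mem_comap,
            AddSubgroup.mem_zmultiples_iff]
          refine ⟨0, ?_⟩
          have hij : (i j : ℕ) ≠ (i h : ℕ) := by
            intro e
            exact absurd (hinj (Fin.val_injective e)) (ne_of_lt hj)
          have h1 : Fin.castLE hn'.le (i j) ≠ a := by
            simp only [ha, Ne, Fin.ext_iff, Fin.coe_castLE]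
            exact hij
          have h2 : b ≠ a := Ne.symm hab
          simp only [Pi.evalAddMonoidHom_apply, Pi.smul_apply, Pi.add_apply, zero_smul]
          show (0 : ℤ) = (d : ℤ) •
            ((Pi.single (Fin.castLE hn'.le (i j)) (1 : ℤ) : Fin n → ℤ) a +
             (Pi.single b (1 : ℤ) : Fin n → ℤ) a)
          rw [Pi.single_eq_of_ne (Ne.symm h1), Pi.single_eq_of_ne hab, add_zero, smul_zero]
      have h' := hle hx1
      rw [AddSubgroup.mem_comap, AddSubgroup.mem_zmultiples_iff] at h'
      obtain ⟨z, hz⟩ := h'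
      simp only [Pi.evalAddMonoidHom_apply, zsmul_eq_mul, Int.cast_id] at hz
      exact ⟨z, by rw [← hz, mul_comm]⟩
    have hxa : x a = t * d := by
      rw [← ht]
      simp only [Pi.smul_apply, hva, smul_eq_mul, mul_one]
    have hlcm : (m : ℤ) ∣ t * d := by
      have h1 : (c : ℤ) ∣ t * d := hxa ▸ hdvd
      have h2 : (d : ℤ) ∣ t * d := ⟨t, by ring⟩
      have h3 := Int.coe_lcm_dvd h1 h2
      have h4 : Int.lcm (c : ℤ) (d : ℤ) = m := by
        simp only [Int.lcm, Int.natAbs_natCast, hm]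
      rwa [h4] at h3
    obtain ⟨s, hs⟩ := hlcm
    refine ⟨s, ?_⟩
    rw [← ht, smul_smul, smul_smul]
    congr 1
    rw [hs]
    ring
  · rw [AddSubgroup.closure_le, Set.singleton_subset_iff, SetLike.mem_coe,
      AddSubgroup.mem_inf]
    constructor
    · have hcm : c ∣ m := Nat.dvd_lcm_left c d
      obtain ⟨q, hq⟩ := hcm
      have key : (m : ℤ) • v = (q : ℤ) • (Pi.single a (c : ℤ) : Fin n → ℤ)
          + (q : ℤ) • (Pi.single b (c : ℤ) : Fin n → ℤ) := by
        have h1 : (Pi.single a (c : ℤ) : Fin n → ℤ) = (c : ℤ) • Pi.single a (1 : ℤ) := by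
          rw [← Pi.single_smul, smul_eq_mul, mul_one]
        have h2 : (Pi.single b (c : ℤ) : Fin n → ℤ) = (c : ℤ) • Pi.single b (1 : ℤ) := by
          rw [← Pi.single_smul, smul_eq_mul, mul_one]
        rw [hv, smul_add, h1, h2, smul_smul, smul_smul]
        have hqc : (m : ℤ) = (q : ℤ) * (c : ℤ) := by rw [hq]; push_cast; ring
        rw [hqc]
      rw [key]
      refine add_mem (AddSubgroup.zsmul_mem _ (AddSubgroup.subset_closure ?_) _)
        (AddSubgroup.zsmul_mem _ (AddSubgroup.subset_closure ?_) _)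
      · exact Or.inl ⟨a, rfl⟩
      · exact Or.inl ⟨b, rfl⟩
    · rw [AddSubgroup.mem_closure_singleton]
      obtain ⟨q, hq⟩ := Nat.dvd_lcm_right c d
      refine ⟨q, ?_⟩
      rw [smul_smul]
      congr 1
      rw [hm, hq]; push_cast; ring
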